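/- Let G be a prime graph. A vertex v ∈ V(G) is simplicial if and only if v has degree one in every induced copy of P4 in G containing v. -/

import Mathlib

open SimpleGraph

variable {V : Type*} {W : Type*}

/-- A vertex `v` is *mixed* on a set `X` if it has both a neighbor and a non-neighbor in `X`. -/
def Mixed (G : SimpleGraph V) (v : V) (X : Set V) : Prop :=
  (∃ x ∈ X, G.Adj v x) ∧ (∃ x ∈ X, ¬ G.Adj v x)

/-- A homogeneous set: `1 < |X| < |V(G)|` and no outside vertex is mixed on `X`. -/
def IsHomogeneousSet [Fintype V] (G : SimpleGraph V) (X : Set V) : Prop :=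
  1 < X.ncard ∧ X.ncard < Fintype.card V ∧ ∀ v ∉ X, ¬ Mixed G v X

/-- A graph is prime if it has at least four vertices and no homogeneous set. -/
def IsPrimeGraph [Fintype V] (G : SimpleGraph V) : Prop :=
  4 ≤ Fintype.card V ∧ ∀ X : Set V, ¬ IsHomogeneousSet G X

/-- A vertex is simplicial if its neighborhood is a clique. -/
def Simplicial (G : SimpleGraph V) (v : V) : Prop :=
  G.IsClique (G.neighborSet v)

/-- A vertex is antisimplicial if its non-neighborhood is a stable set. -/
def Antisimplicial (G : SimpleGraph V) (v : V) : Prop :=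
  Gᶜ.IsClique {u | ¬ G.Adj v u}

/-- `G` is `H`-free: there is no induced copy of `H` in `G`. -/
def HFree (H : SimpleGraph W) (G : SimpleGraph V) : Prop :=
  ¬ Nonempty (H ↪g G)

/-- `a-b-c-d` is an induced four-vertex path in `G`. -/
def IsInducedP4 (G : SimpleGraph V) (a b c d : V) : Prop :=
  a ≠ b ∧ a ≠ c ∧ a ≠ d ∧ b ≠ c ∧ b ≠ d ∧ c ≠ d ∧
  G.Adj a b ∧ G.Adj b c ∧ G.Adj c d ∧ ¬ G.Adj a c ∧ ¬ G.Adj a d ∧ ¬ G.Adj b d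

theorem stmt12 [Fintype V] (G : SimpleGraph V) (hprime : IsPrimeGraph G) (v : V) :
    Simplicial G v ↔
      ∀ a b c d, IsInducedP4 G a b c d → (v = a ∨ v = b ∨ v = c ∨ v = d) →
        (v = a ∨ v = d) := by
  classical
  constructor
  · rintro hs a b c d ⟨hab, hac, had, hbc, hbd, hcd, eab, ebc, ecd, nac, nad, nbd⟩ hmem
    rcases hmem with rfl | rfl | rfl | rfl
    · exact Or.inl rfl
    · -- v = b : a, c ∈ N(b) would force a~c
      exact absurd (hs (by simpa using eab.symm) (by simpa using ebc) hac) nac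
    · -- v = c : b, d ∈ N(c) would force b~d
      exact absurd (hs (by simpa using ebc.symm) (by simpa using ecd) hbd) nbd
    · exact Or.inr rfl
  · intro hP4
    intro x hx y hy hxy
    by_contra hnxy
    simp only [mem_neighborSet] at hx hy
    -- the anti-reachability relation inside N(v)
    set R : V → V → Prop := fun p q => G.Adj v p ∧ G.Adj v q ∧ p ≠ q ∧ ¬ G.Adj p q with hR
    set X : Set V := {u | Relation.ReflTransGen R x u} with hX
    have hxX : x ∈ X := Relation.ReflTransGen.refl
    have hyX : y ∈ X := Relation.ReflTransGen.single ⟨hx, hy, hxy, hnxy⟩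
    -- every vertex of X is a neighbor of v
    have hXN : ∀ u ∈ X, G.Adj v u := by
      intro u hu
      induction hu with
      | refl => exact hx
      | tail _ h ih => exact h.2.1
    have hvX : v ∉ X := fun h => G.loopless.irrefl v (hXN v h)
    -- key: a non-neighbor of v that is mixed on an anti-edge of N(v) gives a midpoint P4
    have key : ∀ z p q, ¬ G.Adj v z → z ≠ v → R p q → G.Adj z p → G.Adj z q := by
      intro z p q hzv hzvne hRpq hzp
      obtain ⟨hvp, hvq, hpq, hnpq⟩ := hRpq
      by_contra hzq
      have hzp' : z ≠ p := fun h => G.loopless.irrefl p (h ▸ hzp)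
      have hzq' : z ≠ q := fun h => hnpq (G.adj_symm (h ▸ hzp))
      have hp4 : IsInducedP4 G z p v q :=
        ⟨hzp', hzvne, hzq', hvp.ne', hpq, hvq.ne, hzp, G.adj_symm hvp, hvq,
          fun h => hzv (G.adj_symm h), hzq, hnpq⟩
      rcases hP4 z p v q hp4 (Or.inr (Or.inr (Or.inl rfl))) with h | h
      · exact hzvne h.symm
      · exact hvq.ne h
    -- adjacency to z ∉ N[v] is constant along X
    have hconst : ∀ z, ¬ G.Adj v z → z ≠ v → ∀ u ∈ X, (G.Adj z u ↔ G.Adj z x) := by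
      intro z hzv hzvne u hu
      induction hu with
      | refl => rfl
      | @tail b c hs h ih =>
        constructor
        · intro hzc
          have hRsym : R c b := ⟨h.2.1, h.1, h.2.2.1.symm, fun hh => h.2.2.2 (G.adj_symm hh)⟩
          exact ih.mp (key z c b hzv hzvne hRsym hzc)
        · intro hzx
          exact key z b c hzv hzvne h (ih.mpr hzx)
    -- X is homogeneous: contradiction
    refine hprime.2 X ⟨?_, ?_, ?_⟩
    · exact (Set.one_lt_ncard (Set.toFinite X)).mpr ⟨x, hxX, y, hyX, hxy⟩
    · have hsub : X ⊂ Set.univ := ⟨Set.subset_univ X, fun h => hvX (h (Set.mem_univ v))⟩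
      calc X.ncard < (Set.univ : Set V).ncard := Set.ncard_lt_ncard hsub Set.finite_univ
        _ = Fintype.card V := by rw [Set.ncard_univ, Nat.card_eq_fintype_card]
    · rintro z hz ⟨⟨u, hu, hzu⟩, ⟨w, hw, hzw⟩⟩
      by_cases hzv : z = v
      · exact hzw (hzv ▸ hXN w hw)
      by_cases hzw' : z = w
      · exact hz (hzw' ▸ hw)
      by_cases hzvadj : G.Adj v z
      · -- z ∈ N(v)\X : non-adjacency to w ∈ X would put z in X
        exact hz (Relation.ReflTransGen.tail hw
          ⟨hXN w hw, hzvadj, fun h => hzw' h.symm, fun h => hzw (G.adj_symm h)⟩)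
      · -- z ∉ N[v]: adjacency constant on X
        exact ((hconst z hzvadj hzv w hw).not.mp hzw)
          ((hconst z hzvadj hzv u hu).mp hzu)
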